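/- For every d ≥ 1 and n ≥ 1, the number P_d(n) of d-dimensional n×⋯×n partitions with entries in {0,...,n} satisfies P_d(n) ≥ 2^{(2/3)·n^d/√(d+1)}. -/

import Mathlib

open Finset

/-- `P_d(n)`: the number of `d`-dimensional `n × ⋯ × n` partitions with entries in
`{0,…,n}`, i.e. functions `[n]^d → {0,…,n}` weakly decreasing in each coordinate. -/
noncomputable def Pnum (d n : ℕ) : ℕ :=
  Nat.card {A : (Fin d → Fin n) → Fin (n + 1) // Antitone A}


lemma key2 (B t : ℝ) (ht : 0 < t) (h1 : 12*t ≤ B) (h2 : 2/3 ≤ B*t) :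
    0 ≤ 2*B^2 + 3*B^2*t - 7*B - 10*B*t - 3*B*t^2 + 4 + 10*t + 8*t^2 + 2*t^3 := by
  have hp : 0 ≤ B - 12*t := by linarith
  have hq : 0 ≤ B*t - 2/3 := by linarith
  nlinarith [mul_nonneg hp hq, mul_nonneg hp ht.le, mul_nonneg hq ht.le,
    mul_nonneg (mul_nonneg hp ht.le) ht.le, mul_nonneg (mul_nonneg hq ht.le) ht.le,
    mul_nonneg hp hp, mul_nonneg hq hq, sq_nonneg (t - 1/4), mul_pos ht ht]

lemma key (B t w : ℝ) (ht : 0 < t) (h1 : 12*t ≤ B) (h2 : 2/3 ≤ B*t)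
    (h3 : -1 - t ≤ w) (h4 : w ≤ 1 - t) :
    0 ≤ 2*B^2 + 3*B^2*t + 4*B*w - 3*B*w^2 + 2*w^2 - 2*w^3 := by
  have hB : 0 < B := lt_of_lt_of_le (by linarith) h1
  have hB8 : 8 ≤ B^2 := by nlinarith
  rcases le_or_gt 0 w with hw | hw
  · -- w ≥ 0 : w ≤ 1
    have hw1 : w ≤ 1 := by linarith
    nlinarith [mul_nonneg (mul_nonneg hw hw) (by linarith : (0:ℝ) ≤ 1 - w),
      mul_nonneg hw hB.le, sq_nonneg w]
  · -- w < 0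
    have ha : 0 ≤ w + 1 + t := by linarith
    have hQ : 0 ≤ 4*B + (3*B-2)*((1+t) - w) - 2*(w^2 - w*(1+t) + (1+t)^2) := by
      nlinarith [mul_nonneg ha (neg_nonneg.mpr hw.le), mul_pos hB ht, sq_nonneg (w+1+t),
        mul_nonneg ha ht.le, mul_nonneg (neg_nonneg.mpr hw.le) ht.le]
    have hf := key2 B t ht h1 h2
    nlinarith [mul_nonneg ha hQ]


open Finset

lemma sr1 (n : ℕ) : ∑ i ∈ Finset.range n, (i:ℝ) = n*((n:ℝ)-1)/2 := by
  induction n with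
  | zero => simp
  | succ m ih => rw [Finset.sum_range_succ, ih]; push_cast; ring

lemma sr2 (n : ℕ) : ∑ i ∈ Finset.range n, (i:ℝ)^2 = n*((n:ℝ)-1)*(2*n-1)/6 := by
  induction n with
  | zero => simp
  | succ m ih => rw [Finset.sum_range_succ, ih]; push_cast; ring

lemma gsum (n : ℕ) : ∑ a : Fin n, (2*(a:ℝ) - ((n:ℝ)-1)) = 0 := by
  rw [Fin.sum_univ_eq_sum_range (fun a => 2*(a:ℝ) - ((n:ℝ)-1))]
  rw [Finset.sum_sub_distrib, ← Finset.mul_sum, sr1, Finset.sum_const, Finset.card_range]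
  simp only [nsmul_eq_mul]
  ring

lemma gsqsum (n : ℕ) : ∑ a : Fin n, (2*(a:ℝ) - ((n:ℝ)-1))^2 = n*((n:ℝ)^2-1)/3 := by
  rw [Fin.sum_univ_eq_sum_range (fun a => (2*(a:ℝ) - ((n:ℝ)-1))^2)]
  have h : ∀ i ∈ Finset.range n, (2*(i:ℝ) - ((n:ℝ)-1))^2
      = 4*(i:ℝ)^2 - (4*((n:ℝ)-1))*(i:ℝ) + ((n:ℝ)-1)^2 := fun i _ => by ring
  rw [Finset.sum_congr rfl h]
  rw [Finset.sum_add_distrib, Finset.sum_sub_distrib, ← Finset.mul_sum, ← Finset.mul_sum,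
    sr1, sr2, Finset.sum_const, Finset.card_range]
  simp only [nsmul_eq_mul]
  ring

lemma structural (n D : ℕ) (f : Fin n → ℝ) (F : ℝ → ℝ) :
    ∑ x : Fin (D+1) → Fin n, F (∑ i, f (x i))
      = ∑ a : Fin n, ∑ y : Fin D → Fin n, F (f a + ∑ i, f (y i)) := by
  calc ∑ x : Fin (D+1) → Fin n, F (∑ i, f (x i))
      = ∑ p : Fin n × (Fin D → Fin n), F (f p.1 + ∑ i, f (p.2 i)) := by
        apply Fintype.sum_equiv (Fin.consEquiv (fun _ => Fin n)).symm
        intro x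
        congr 1
        rw [Fin.sum_univ_succ]
        simp [Fin.consEquiv, Fin.tail]
    _ = ∑ a : Fin n, ∑ y : Fin D → Fin n, F (f a + ∑ i, f (y i)) := by
        rw [Fintype.sum_prod_type]

lemma momM (n D : ℕ) (f : Fin n → ℝ) (hf : ∑ a, f a = 0) :
    ∑ x : Fin D → Fin n, (∑ i, f (x i)) = 0 := by
  induction D with
  | zero => simp
  | succ E ih =>
    rw [show (∑ x : Fin (E+1) → Fin n, ∑ i, f (x i))
        = ∑ a, ∑ y : Fin E → Fin n, (f a + ∑ i, f (y i)) from structural n E f (fun z => z)]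
    have h1 : ∀ a : Fin n, ∑ y : Fin E → Fin n, (f a + ∑ i, f (y i))
        = (n:ℝ)^E * f a := by
      intro a
      rw [Finset.sum_add_distrib, ih, Finset.sum_const, add_zero]
      simp [Fintype.card_fun, mul_comm]
    rw [Finset.sum_congr rfl (fun a _ => h1 a), ← Finset.mul_sum, hf, mul_zero]

lemma momV (n D : ℕ) (f : Fin n → ℝ) (hf : ∑ a, f a = 0) :
    (∑ x : Fin D → Fin n, (∑ i, f (x i))^2) * n = D * (n:ℝ)^D * (∑ a, (f a)^2) := by
  induction D with
  | zero => simp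
  | succ E ih =>
    rw [show (∑ x : Fin (E+1) → Fin n, (∑ i, f (x i))^2)
        = ∑ a, ∑ y : Fin E → Fin n, (f a + ∑ i, f (y i))^2 from structural n E f (fun z => z^2)]
    have h1 : ∀ a : Fin n, ∑ y : Fin E → Fin n, (f a + ∑ i, f (y i))^2
        = (n:ℝ)^E * (f a)^2 + (∑ y : Fin E → Fin n, (∑ i, f (y i))^2) := by
      intro a
      have h2 : ∀ y : Fin E → Fin n, (f a + ∑ i, f (y i))^2
          = (f a)^2 + 2 * f a * (∑ i, f (y i)) + (∑ i, f (y i))^2 := fun y => by ring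
      rw [Finset.sum_congr rfl (fun y _ => h2 y), Finset.sum_add_distrib,
        Finset.sum_add_distrib, ← Finset.mul_sum, momM n E f hf, Finset.sum_const]
      simp [Fintype.card_fun, mul_comm]
    rw [Finset.sum_congr rfl (fun a _ => h1 a), Finset.sum_add_distrib, ← Finset.mul_sum,
      Finset.sum_const]
    simp only [Finset.card_univ, Fintype.card_fun, Fintype.card_fin, nsmul_eq_mul]
    push_cast
    linear_combination (n:ℝ) * ih


lemma select (n D : ℕ) (hn : 1 ≤ n) (hD : 2 ≤ D) :
    ∃ v : ℕ, 2 ≤ v ∧ v % 2 = (D * (n-1)) % 2 ∧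
      (n * Real.sqrt D) * (D * ((n:ℝ)^2 - 1)) ≤ (3 * (n * Real.sqrt D) + 2 - 2*v) * (v:ℝ)^2 := by
  set B : ℝ := n * Real.sqrt D with hBdef
  have hD0 : (0:ℝ) ≤ D := by positivity
  have hsq : Real.sqrt D ^ 2 = D := Real.sq_sqrt hD0
  have hs1 : (1:ℝ) ≤ Real.sqrt D := by
    rw [show (1:ℝ) = Real.sqrt 1 by simp]
    exact Real.sqrt_le_sqrt (by exact_mod_cast hD.trans' one_le_two)
  have hB2 : B^2 = (n:ℝ)^2 * D := by rw [hBdef, mul_pow, hsq]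
  have hn1 : (1:ℝ) ≤ (n:ℝ) := by exact_mod_cast hn
  have hBpos : 0 < B := by apply mul_pos (by linarith) (by linarith)
  rcases eq_or_lt_of_le hn with h1 | hn2
  · -- n = 1
    refine ⟨2, le_refl _, by simp [← h1], ?_⟩
    have he : ((n:ℝ)^2 - 1) = 0 := by rw [← h1]; norm_num
    rw [he, mul_zero, mul_zero]
    have hB1 : 1 ≤ B := by
      rw [hBdef]; nlinarith
    push_cast
    nlinarith
  · -- n ≥ 2
    have hn2' : (2:ℝ) ≤ (n:ℝ) := by exact_mod_cast hn2
    have hD2 : (2:ℝ) ≤ (D:ℝ) := by exact_mod_cast hD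
    set t : ℝ := D / (3 * B) with htdef
    have ht : 0 < t := by positivity
    have hBt : B * t = D / 3 := by rw [htdef]; field_simp
    have hBt2 : (2:ℝ)/3 ≤ B * t := by rw [hBt]; linarith
    have h12 : 12 * t ≤ B := by
      have h3 : 12 * t = 4 * (D:ℝ) / B := by rw [htdef]; field_simp; ring
      rw [h3, div_le_iff₀ hBpos]
      nlinarith [mul_nonneg (show (0:ℝ) ≤ (n:ℝ)^2 - 4 by nlinarith) hD0]
    have hB28 : 2.8 ≤ B := by nlinarith
    have hu2 : (2:ℝ) ≤ B - t := by linarith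
    set k : ℕ := ⌊B - t⌋₊ with hkdef
    have hk2 : 2 ≤ k := Nat.le_floor (by exact_mod_cast hu2)
    have hkle : (k:ℝ) ≤ B - t := Nat.floor_le (by linarith)
    have hklt : B - t < k + 1 := Nat.lt_floor_add_one _
    set c : ℕ := D * (n - 1) with hcdef
    refine ⟨if k % 2 = c % 2 then k else k + 1, ?_, ?_, ?_⟩
    · split <;> omega
    · split <;> omega
    · set v : ℕ := if k % 2 = c % 2 then k else k + 1 with hvdef
      have hv1 : (k:ℝ) ≤ (v:ℝ) := by
        rw [hvdef]; split <;> push_cast <;> linarith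
      have hv2 : (v:ℝ) ≤ (k:ℝ) + 1 := by
        rw [hvdef]; split <;> push_cast <;> linarith
      set w : ℝ := (v:ℝ) - B with hwdef
      have h3 : -1 - t ≤ w := by rw [hwdef]; linarith
      have h4 : w ≤ 1 - t := by rw [hwdef]; linarith
      have hkey := key B t w ht h12 hBt2 h3 h4
      have hD3 : (D:ℝ) = 3 * B * t := by rw [htdef]; field_simp
      have h5 : (D:ℝ) * ((n:ℝ)^2 - 1) = B^2 - 3*B*t := by
        linear_combination -hB2 - hD3
      have hvBw : (v:ℝ) = B + w := by rw [hwdef]; ring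
      have hid : (3*B+2-2*(v:ℝ))*(v:ℝ)^2 - B*((D:ℝ)*((n:ℝ)^2-1))
          = 2*B^2+3*B^2*t+4*B*w-3*B*w^2+2*w^2-2*w^3 := by
        rw [h5, hvBw]; ring
      linarith [hkey, hid]



variable {d n : ℕ}

def lev (d n k : ℕ) : Finset (Fin (d+1) → Fin n) :=
  Finset.univ.filter (fun x => (∑ i, (x i : ℕ)) = k)

noncomputable def AS (S : Finset (Fin (d+1) → Fin n)) (y : Fin d → Fin n) : Fin (n+1) :=
  (S.filter (fun w => ∀ i : Fin d, y i ≤ w (Fin.castSucc i))).sup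
    (fun w => (w (Fin.last d)).succ)

lemma AS_antitone (S : Finset (Fin (d+1) → Fin n)) : Antitone (AS S) := by
  intro y₁ y₂ h12
  apply Finset.sup_mono
  intro w hw
  rw [Finset.mem_filter] at hw ⊢
  exact ⟨hw.1, fun i => le_trans (h12 i) (hw.2 i)⟩

lemma snocsum (y : Fin d → Fin n) (z : Fin n) :
    (∑ i : Fin (d+1), ((Fin.snoc y z : Fin (d+1) → Fin n) i : ℕ))
      = (∑ i : Fin d, (y i : ℕ)) + (z : ℕ) := by
  rw [Fin.sum_univ_castSucc]
  simp

lemma mem_AS_iff {k : ℕ} {S : Finset (Fin (d+1) → Fin n)}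
    (hS : S ⊆ lev d n k) (y : Fin d → Fin n) (z : Fin n)
    (hyz : Fin.snoc y z ∈ lev d n k) :
    Fin.snoc y z ∈ S ↔ AS S y = z.succ := by
  have hsum : ∀ w, w ∈ lev d n k →
      (∑ i : Fin d, ((Fin.init w) i : ℕ)) + (w (Fin.last d) : ℕ) = k := by
    intro w hw
    rw [lev, Finset.mem_filter] at hw
    rw [← snocsum, Fin.snoc_init_self]
    exact hw.2
  have hyzsum : (∑ i : Fin d, (y i : ℕ)) + (z : ℕ) = k := by
    have := hsum _ hyz
    simpa [Fin.init_snoc, Fin.snoc_last] using this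
  constructor
  · intro hmem
    apply le_antisymm
    · -- sup ≤ z.succ
      apply Finset.sup_le
      intro w hw
      rw [Finset.mem_filter] at hw
      obtain ⟨hwS, hwy⟩ := hw
      have h1 := hsum w (hS hwS)
      have h3 : (∑ i : Fin d, (y i : ℕ)) ≤ ∑ i : Fin d, ((Fin.init w) i : ℕ) :=
        Finset.sum_le_sum (fun i _ => hwy i)
      have h4 : (w (Fin.last d) : ℕ) ≤ (z : ℕ) := by omega
      rw [Fin.le_def]
      simpa using Nat.succ_le_succ h4
    · -- z.succ ≤ sup
      have hm2 : (Fin.snoc y z : Fin (d+1) → Fin n)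
          ∈ S.filter (fun w => ∀ i : Fin d, y i ≤ w (Fin.castSucc i)) := by
        rw [Finset.mem_filter]
        exact ⟨hmem, fun i => by rw [Fin.snoc_castSucc]⟩
      have h7 := Finset.le_sup (f := fun w : Fin (d+1) → Fin n => (w (Fin.last d)).succ) hm2
      simp only [Fin.snoc_last] at h7
      exact h7
  · intro hAS
    rcases Finset.eq_empty_or_nonempty
      (S.filter (fun w => ∀ i : Fin d, y i ≤ w (Fin.castSucc i))) with he | hne
    · rw [AS, he, Finset.sup_empty] at hAS
      exact absurd hAS.symm (Fin.succ_ne_zero z)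
    · obtain ⟨w, hwmem, hwsup⟩ := Finset.exists_mem_eq_sup _ hne
        (fun w : Fin (d+1) → Fin n => (w (Fin.last d)).succ)
      rw [AS, hwsup] at hAS
      rw [Finset.mem_filter] at hwmem
      obtain ⟨hwS, hwy⟩ := hwmem
      have hz : w (Fin.last d) = z := by rwa [Fin.succ_inj] at hAS
      have h1 := hsum w (hS hwS)
      have h3 : ∀ i ∈ Finset.univ, (y i : ℕ) ≤ ((Fin.init w) i : ℕ) := fun i _ => hwy i
      rw [hz] at h1
      have h4 : ∀ i ∈ Finset.univ, (y i : ℕ) = ((Fin.init w) i : ℕ) :=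
        (Finset.sum_eq_sum_iff_of_le h3).mp
          (Nat.add_right_cancel (hyzsum.trans h1.symm))
      have h5 : y = Fin.init w := by
        funext i
        exact Fin.ext (h4 i (Finset.mem_univ i))
      have h6 : Fin.snoc y z = w := by
        rw [h5, ← hz, Fin.snoc_init_self]
      rwa [h6]

lemma pow_card_le_Pnum (k : ℕ) :
    2 ^ ((lev d n k).card) ≤ Pnum d n := by
  classical
  rw [Pnum, Nat.card_eq_fintype_card]
  rw [← Finset.card_powerset, ← Fintype.card_coe]
  apply Fintype.card_le_of_injective
    (fun (S : {x // x ∈ (lev d n k).powerset}) =>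
      (⟨AS (S : Finset (Fin (d+1) → Fin n)), AS_antitone _⟩ :
      {A : (Fin d → Fin n) → Fin (n + 1) // Antitone A}))
  intro S₁ S₂ hEq
  simp only [Subtype.mk.injEq] at hEq
  have hs₁ : (S₁ : Finset (Fin (d+1) → Fin n)) ⊆ lev d n k :=
    Finset.mem_powerset.mp S₁.2
  have hs₂ : (S₂ : Finset (Fin (d+1) → Fin n)) ⊆ lev d n k :=
    Finset.mem_powerset.mp S₂.2
  apply Subtype.ext
  ext x
  constructor
  · intro hx
    have hxl : x ∈ lev d n k := hs₁ hx
    have h1 : x = Fin.snoc (Fin.init x) (x (Fin.last d)) := (Fin.snoc_init_self x).symm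
    rw [h1] at hxl hx ⊢
    rw [mem_AS_iff hs₂ _ _ hxl, ← hEq, ← mem_AS_iff hs₁ _ _ hxl]
    exact hx
  · intro hx
    have hxl : x ∈ lev d n k := hs₂ hx
    have h1 : x = Fin.snoc (Fin.init x) (x (Fin.last d)) := (Fin.snoc_init_self x).symm
    rw [h1] at hxl hx ⊢
    rw [mem_AS_iff hs₁ _ _ hxl, hEq, ← mem_AS_iff hs₂ _ _ hxl]
    exact hx



lemma combineAlg (nr q P s2 vr Lc Vsum : ℝ) (hq : 0 < q) (hP : 0 < P)
    (hLc : 0 ≤ Lc) (hv : 2 ≤ vr) (hVs : Vsum = nr*P*s2/3)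
    (hsub : (nr*P - (vr-1)*Lc)*vr^2 ≤ Vsum)
    (hsel : nr*q*s2 ≤ (3*(nr*q)+2-2*vr)*vr^2) :
    (2/3)*P/q ≤ Lc := by
  have h1 : ((nr*P - (vr-1)*Lc)*vr^2)*(3*q) ≤ (nr*P*s2/3)*(3*q) := by
    apply mul_le_mul_of_nonneg_right _ (by positivity)
    rw [← hVs]; exact hsub
  have h2 : P*(nr*q*s2) ≤ P*((3*(nr*q)+2-2*vr)*vr^2) :=
    mul_le_mul_of_nonneg_left hsel hP.le
  have h3 : 2*P*((vr-1)*vr^2) ≤ 3*q*Lc*((vr-1)*vr^2) := by nlinarith [h1, h2]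
  have hpos : (0:ℝ) < (vr-1)*vr^2 := by nlinarith
  have h4 : 2*P ≤ 3*q*Lc := le_of_mul_le_mul_right h3 hpos
  rw [div_le_iff₀ hq]
  linarith

lemma anticonc (n D : ℕ) (hn : 1 ≤ n) (hD : 2 ≤ D) :
    ∃ k : ℕ, (2/3) * (n:ℝ)^(D-1) / Real.sqrt D
      ≤ ((Finset.univ.filter (fun x : Fin D → Fin n => (∑ i, (x i : ℕ)) = k)).card : ℝ) := by
  obtain ⟨v, hv2, hvpar, hsel⟩ := select n D hn hD
  set c : ℕ := D * (n-1) with hc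
  set f : Fin n → ℝ := fun a => 2*(a:ℝ) - ((n:ℝ)-1) with hf
  have hfs : ∑ a, f a = 0 := gsum n
  set S : (Fin D → Fin n) → ℝ := fun x => ∑ i, f (x i) with hS
  set σf : (Fin D → Fin n) → ℕ := fun x => ∑ i, (x i : ℕ) with hσ
  set L : ℕ → Finset (Fin D → Fin n) :=
    fun k => Finset.univ.filter (fun x => σf x = k) with hL
  have hSx : ∀ x, S x = 2*(σf x : ℝ) - (c:ℝ) := by
    intro x
    have h1 : ((σf x : ℕ):ℝ) = ∑ i, ((x i : ℕ):ℝ) := by rw [hσ]; push_cast; rfl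
    have h2 : ((c:ℕ):ℝ) = (D:ℝ) * ((n:ℝ)-1) := by
      rw [hc]; push_cast [Nat.cast_sub hn]; ring
    rw [hS, h1, h2]
    simp only [hf]
    rw [Finset.sum_sub_distrib, Finset.sum_const, ← Finset.mul_sum]
    simp [nsmul_eq_mul]
  -- Chebyshev
  set bad : Finset (Fin D → Fin n) := Finset.univ.filter (fun x => (v:ℝ) ≤ |S x|) with hbad
  set Vsum : ℝ := ∑ x : Fin D → Fin n, (S x)^2 with hV
  have hcheb : (bad.card : ℝ) * (v:ℝ)^2 ≤ Vsum := by
    have h1 : (bad.card : ℝ) * (v:ℝ)^2 = ∑ _x ∈ bad, (v:ℝ)^2 := by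
      rw [Finset.sum_const, nsmul_eq_mul]
    rw [h1, hV]
    apply le_trans (Finset.sum_le_sum (fun x hx => ?_))
      (Finset.sum_le_sum_of_subset_of_nonneg (Finset.filter_subset _ _)
        (fun x _ _ => sq_nonneg (S x)))
    have h2 : (v:ℝ) ≤ |S x| := (Finset.mem_filter.mp hx).2
    nlinarith [abs_nonneg (S x), sq_abs (S x)]
  -- levels window
  set ia : ℕ := (c + 2 - v)/2 with hia
  set ib : ℕ := (c + v - 2)/2 with hib
  have hcover : ∀ x : Fin D → Fin n, x ∉ bad → σf x ∈ Finset.Icc ia ib := by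
    intro x hx
    have h1 : |S x| < v := by
      by_contra h
      exact hx (Finset.mem_filter.mpr ⟨Finset.mem_univ x, le_of_not_gt h⟩)
    rw [hSx x] at h1
    have h2 : |2*((σf x : ℕ):ℤ) - (c:ℤ)| < (v:ℤ) := by
      have : ((|2*((σf x : ℕ):ℤ) - (c:ℤ)| : ℤ) : ℝ) < ((v:ℤ):ℝ) := by push_cast; exact h1
      exact_mod_cast this
    rw [abs_lt] at h2
    obtain ⟨h3, h4⟩ := h2
    rw [Finset.mem_Icc, hia, hib]
    omega
  have hKcard : (Finset.Icc ia ib).card ≤ v - 1 := by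
    rw [Nat.card_Icc, hia, hib]; omega
  have hKne : (Finset.Icc ia ib).Nonempty := by
    rw [Finset.nonempty_Icc, hia, hib]; omega
  obtain ⟨k₀, hk₀K, hk₀max⟩ := Finset.exists_max_image (Finset.Icc ia ib)
    (fun k => (L k).card) hKne
  refine ⟨k₀, ?_⟩
  -- counting
  have hsplit : ((n:ℕ)^D : ℕ) ≤ bad.card + (v-1) * (L k₀).card := by
    have h1 : (Finset.univ : Finset (Fin D → Fin n))
        ⊆ bad ∪ (Finset.Icc ia ib).biUnion L := by
      intro x _
      by_cases hx : x ∈ bad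
      · exact Finset.mem_union_left _ hx
      · refine Finset.mem_union_right _ (Finset.mem_biUnion.mpr ⟨σf x, hcover x hx, ?_⟩)
        rw [hL]
        exact Finset.mem_filter.mpr ⟨Finset.mem_univ x, rfl⟩
    have h2 : ((Finset.univ : Finset (Fin D → Fin n)).card) = n^D := by
      rw [Finset.card_univ, Fintype.card_fun]
      simp
    calc (n:ℕ)^D = (Finset.univ : Finset (Fin D → Fin n)).card := h2.symm
      _ ≤ (bad ∪ (Finset.Icc ia ib).biUnion L).card := Finset.card_le_card h1
      _ ≤ bad.card + ((Finset.Icc ia ib).biUnion L).card := Finset.card_union_le _ _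
      _ ≤ bad.card + ∑ k ∈ Finset.Icc ia ib, (L k).card :=
          Nat.add_le_add_left (Finset.card_biUnion_le) _
      _ ≤ bad.card + (Finset.Icc ia ib).card * (L k₀).card := by
          apply Nat.add_le_add_left
          apply Finset.sum_le_card_nsmul
          intro k hk
          exact hk₀max k hk
      _ ≤ bad.card + (v-1) * (L k₀).card := by
          apply Nat.add_le_add_left
          exact Nat.mul_le_mul_right _ hKcard
  -- variance value
  have hVn : Vsum * n = (D:ℝ) * (n:ℝ)^D * ((n:ℝ)*((n:ℝ)^2-1)/3) := by
    rw [hV, hS]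
    rw [momV n D f hfs]
    congr 1
    exact gsqsum n
  -- put it together over ℝ
  set q : ℝ := Real.sqrt D with hq
  have hqpos : 0 < q := Real.sqrt_pos.mpr (by positivity)
  set P : ℝ := (n:ℝ)^(D-1) with hP
  have hPpos : 0 < P := by positivity
  have hnP : (n:ℝ)^D = (n:ℝ) * P := by
    rw [hP, ← pow_succ']
    congr 1
    omega
  set s2 : ℝ := (D:ℝ)*((n:ℝ)^2-1) with hs2
  have hVval : Vsum = (n:ℝ) * P * s2 / 3 := by
    have hn0 : (n:ℝ) ≠ 0 := by positivity
    apply mul_right_cancel₀ hn0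
    rw [hVn, hnP, hs2]; ring
  set Lc : ℝ := ((L k₀).card : ℝ) with hLc
  have hLc0 : 0 ≤ Lc := by positivity
  have hv1R : (1:ℝ) ≤ (v:ℝ) - 1 := by
    have : (2:ℝ) ≤ (v:ℝ) := by exact_mod_cast hv2
    linarith
  have hsplitR : (n:ℝ)*P ≤ (bad.card : ℝ) + ((v:ℝ)-1) * Lc := by
    have := hsplit
    have h1 : ((n^D : ℕ) : ℝ) ≤ ((bad.card + (v-1) * (L k₀).card : ℕ) : ℝ) := by
      exact_mod_cast this
    push_cast [Nat.cast_sub (show 1 ≤ v by omega)] at h1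
    rw [← hLc] at h1
    rw [← hnP]
    linarith [h1]
  have e1 : ((n:ℝ)*P - ((v:ℝ)-1)*Lc) * (v:ℝ)^2 ≤ Vsum := by
    have h1 : (n:ℝ)*P - ((v:ℝ)-1)*Lc ≤ (bad.card : ℝ) := by linarith
    calc ((n:ℝ)*P - ((v:ℝ)-1)*Lc) * (v:ℝ)^2 ≤ (bad.card : ℝ) * (v:ℝ)^2 :=
          mul_le_mul_of_nonneg_right h1 (by positivity)
      _ ≤ Vsum := hcheb
  have hv2R : (2:ℝ) ≤ (v:ℝ) := by exact_mod_cast hv2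
  exact combineAlg (n:ℝ) q P s2 (v:ℝ) Lc Vsum hqpos hPpos hLc0 hv2R hVval e1 hsel


/-- For every `d ≥ 1` and `n ≥ 1`, `P_d(n) ≥ 2^{(2/3)·n^d/√(d+1)}`. -/
theorem stmt11 (d n : ℕ) (hd : 1 ≤ d) (hn : 1 ≤ n) :
    (2 : ℝ) ^ ((2 / 3 : ℝ) * (n : ℝ) ^ d / Real.sqrt (d + 1)) ≤ (Pnum d n : ℝ) := by
  have hD : 2 ≤ d + 1 := by omega
  obtain ⟨k, hk⟩ := anticonc n (d+1) hn hD
  have hk' : (2/3 : ℝ) * (n : ℝ) ^ d / Real.sqrt ((d:ℝ) + 1) ≤ (((lev d n k).card : ℕ) : ℝ) := by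
    have h0 : ((d+1 : ℕ) : ℝ) = (d:ℝ) + 1 := by push_cast; ring
    have h1 : (d+1) - 1 = d := by omega
    rw [h1, h0] at hk
    exact hk
  calc (2 : ℝ) ^ ((2 / 3 : ℝ) * (n : ℝ) ^ d / Real.sqrt (d + 1))
      ≤ (2 : ℝ) ^ (((lev d n k).card : ℝ)) :=
        Real.rpow_le_rpow_of_exponent_le one_le_two hk'
    _ = ((2 ^ ((lev d n k).card) : ℕ) : ℝ) := by
        rw [Real.rpow_natCast]; push_cast; ring
    _ ≤ (Pnum d n : ℝ) := by
        exact_mod_cast pow_card_le_Pnum k
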